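/- With notation as in the C⁰ smoothness condition, suppose c̃_{0jk} = c_{0kj} for all j+k = d. Then the piecewise function equal to p on T and p̃ on T̃ is C¹ across the common edge e (i.e., the gradients of p and p̃ agree on the line through v_2, v_3) if and only if c̃_{1jk} = b_1 c_{1,k,j} + b_2 c_{0,k+1,j} + b_3 c_{0,k,j+1} for all j+k = d−1, where (b_1,b_2,b_3) are the barycentric coordinates of v_4 relative to T. -/

import Mathlib

open Finset


lemma m3 (a b c : ℕ) :
    Nat.multinomial Finset.univ ![a, b, c] = (a + (b + c)).choose a * (b + c).choose b := by
  have h0 : (Finset.univ : Finset (Fin 3)) = insert 0 (insert 1 ({2} : Finset (Fin 3))) := by decide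
  rw [h0, Nat.multinomial_insert (by decide), Nat.multinomial_insert (by decide),
    Nat.multinomial_singleton]
  simp [Finset.sum_insert, Finset.sum_singleton]

lemma m3_symm (a j k : ℕ) :
    Nat.multinomial Finset.univ ![a, j, k] = Nat.multinomial Finset.univ ![a, k, j] := by
  rw [m3, m3]
  have h1 : (j + k).choose j = (k + j).choose k := by
    rw [Nat.add_comm k j, ← Nat.choose_symm (Nat.le_add_right j k)]
    congr 1; omega
  rw [Nat.add_comm j k] at h1 ⊢
  rw [h1]

lemma m_id2 (j k : ℕ) :
    (j + 1) * Nat.multinomial Finset.univ ![0, j + 1, k] = Nat.multinomial Finset.univ ![1, j, k] := by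
  rw [m3, m3]
  simp only [Nat.choose_zero_right, Nat.choose_one_right, one_mul, Nat.zero_add]
  have := Nat.add_one_mul_choose_eq (j + k) j
  have h2 : j + 1 + k = j + k + 1 := by omega
  rw [h2, Nat.mul_comm, ← this]
  ring

lemma m_id1 (j k : ℕ) :
    (k + 1) * Nat.multinomial Finset.univ ![0, j, k + 1] = Nat.multinomial Finset.univ ![1, j, k] := by
  rw [m3_symm 0 j (k+1), m3_symm 1 j k, m_id2 k j]


lemma bern_indep : ∀ (n : ℕ) (a : ℕ → ℝ),
    (∀ s : ℝ, ∑ i ∈ Finset.range (n + 1), a i * ((1 - s) ^ i * s ^ (n - i)) = 0) →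
    ∀ i ≤ n, a i = 0 := by
  intro n
  induction n with
  | zero =>
    intro a h i hi
    interval_cases i
    simpa using h 0
  | succ n ih =>
    intro a h
    have ha0 : a 0 = 0 := by
      have h1 := h 1
      rw [Finset.sum_eq_single 0] at h1
      · simpa using h1
      · intro i hi hne
        simp [zero_pow hne]
      · simp
    have key : ∀ s : ℝ, (1 - s) *
        ∑ i ∈ Finset.range (n + 1), a (i + 1) * ((1 - s) ^ i * s ^ (n - i)) = 0 := by
      intro s
      have h2 := h s
      rw [Finset.sum_range_succ', ha0, zero_mul, add_zero] at h2
      rw [Finset.mul_sum, ← h2]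
      refine Finset.sum_congr rfl fun i hi => ?_
      have hni : n + 1 - (i + 1) = n - i := by omega
      rw [hni]
      ring
    have hg : ∀ s : ℝ,
        (∑ i ∈ Finset.range (n + 1), a (i + 1) * ((1 - s) ^ i * s ^ (n - i))) = 0 := by
      have hcont : Continuous (fun s : ℝ =>
          ∑ i ∈ Finset.range (n + 1), a (i + 1) * ((1 - s) ^ i * s ^ (n - i))) := by
        apply continuous_finset_sum
        intro i _
        fun_prop
      have heq : (fun s : ℝ =>
          ∑ i ∈ Finset.range (n + 1), a (i + 1) * ((1 - s) ^ i * s ^ (n - i))) = fun _ => 0 := by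
        apply Continuous.ext_on (dense_compl_singleton (1 : ℝ)) hcont continuous_const
        intro s hs
        have hs1 : s ≠ 1 := hs
        have := key s
        rcases mul_eq_zero.mp this with h' | h'
        · exact absurd (by linarith [sub_eq_zero.mp h']) (Ne.symm hs1)
        · exact h'
      intro s
      exact congrFun heq s
    intro i hi
    match i with
    | 0 => exact ha0
    | (j + 1) => exact ih (fun i => a (i + 1)) hg j (by omega)



lemma sum_adT3 {M : Type*} [AddCommMonoid M] (d : ℕ) (G : (Fin 3 → ℕ) → M) :
    ∑ t ∈ Finset.Nat.antidiagonalTuple 3 d, G t =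
      ∑ ab ∈ Finset.HasAntidiagonal.antidiagonal d, ∑ jk ∈ Finset.HasAntidiagonal.antidiagonal ab.2,
        G ![ab.1, jk.1, jk.2] := by
  rw [← Finset.sum_sigma (Finset.HasAntidiagonal.antidiagonal d) (fun ab => Finset.HasAntidiagonal.antidiagonal ab.2)
    (fun x => G ![x.1.1, x.2.1, x.2.2])]
  refine Finset.sum_nbij' (fun t => ⟨(t 0, t 1 + t 2), (t 1, t 2)⟩)
    (fun x => ![x.1.1, x.2.1, x.2.2]) ?_ ?_ ?_ ?_ ?_
  · intro t ht
    rw [Finset.Nat.mem_antidiagonalTuple] at ht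
    rw [Fin.sum_univ_three] at ht
    simp [Finset.mem_sigma, Finset.HasAntidiagonal.mem_antidiagonal]
    omega
  · intro x hx
    simp only [Finset.mem_sigma, Finset.HasAntidiagonal.mem_antidiagonal] at hx
    rw [Finset.Nat.mem_antidiagonalTuple, Fin.sum_univ_three]
    simp
    omega
  · intro t ht
    funext i
    fin_cases i <;> simp
  · intro x hx
    simp only [Finset.mem_sigma, Finset.HasAntidiagonal.mem_antidiagonal] at hx
    obtain ⟨⟨a, m⟩, j, k⟩ := x
    obtain ⟨h1, h2⟩ := hx
    simp only at h2
    subst h2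
    rfl
  · intro t ht
    congr 1
    funext i
    fin_cases i <;> rfl


lemma adT3_split {M : Type*} [AddCommMonoid M] (n : ℕ) (G : (Fin 3 → ℕ) → M)
    (hG : ∀ a j k, 2 ≤ a → G ![a, j, k] = 0) :
    ∑ t ∈ Finset.Nat.antidiagonalTuple 3 (n + 1), G t =
      (∑ jk ∈ Finset.HasAntidiagonal.antidiagonal n, G ![1, jk.1, jk.2]) +
      ∑ jk ∈ Finset.HasAntidiagonal.antidiagonal (n + 1), G ![0, jk.1, jk.2] := by
  rw [sum_adT3, Finset.Nat.sum_antidiagonal_eq_sum_range_succ_mk]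
  rw [Finset.sum_range_succ', Finset.sum_range_succ']
  have hz : ∀ i ∈ Finset.range n,
      ∑ jk ∈ Finset.HasAntidiagonal.antidiagonal ((n + 1) - (i + 1 + 1)), G ![i + 1 + 1, jk.1, jk.2] = 0 :=
    fun i _ => Finset.sum_eq_zero fun jk _ => hG _ _ _ (by omega)
  rw [Finset.sum_eq_zero hz, zero_add]
  simp only [Nat.add_sub_cancel, Nat.sub_zero]

noncomputable def Dterm (e : (Fin 3 → ℕ) → ℝ) (g : Fin 3 → ℝ)
    (ℓ : Fin 3 → ((Fin 2 → ℝ) →L[ℝ] ℝ)) (t : Fin 3 → ℕ) : (Fin 2 → ℝ) →L[ℝ] ℝ :=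
  (e t * (Nat.multinomial Finset.univ t : ℝ)) •
    (g 0 ^ t 0 • (g 1 ^ t 1 • (((t 2 : ℝ) * g 2 ^ (t 2 - 1)) • ℓ 2) +
        g 2 ^ t 2 • (((t 1 : ℝ) * g 1 ^ (t 1 - 1)) • ℓ 1)) +
      (g 1 ^ t 1 * g 2 ^ t 2) • (((t 0 : ℝ) * g 0 ^ (t 0 - 1)) • ℓ 0))

lemma deriv_formula (d : ℕ) (hd : 1 ≤ d)
    (γ : (Fin 2 → ℝ) → Fin 3 → ℝ) (ℓ : Fin 3 → ((Fin 2 → ℝ) →L[ℝ] ℝ))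
    (x : Fin 2 → ℝ) (u w : ℝ)
    (hval : γ x = ![0, u, w])
    (hderiv : ∀ i, HasFDerivAt (fun y => γ y i) (ℓ i) x)
    (e : (Fin 3 → ℕ) → ℝ)
    (q : (Fin 2 → ℝ) → ℝ)
    (hq : ∀ y, q y = ∑ t ∈ Finset.Nat.antidiagonalTuple 3 d,
      e t * ((Nat.multinomial Finset.univ t : ℝ) * ∏ i, γ y i ^ t i)) :
    HasFDerivAt q
      ((∑ jk ∈ Finset.HasAntidiagonal.antidiagonal (d - 1),
          e ![1, jk.1, jk.2] * ((Nat.multinomial Finset.univ ![1, jk.1, jk.2] : ℝ)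
            * (u ^ jk.1 * w ^ jk.2))) • ℓ 0 +
       ((∑ jk ∈ Finset.HasAntidiagonal.antidiagonal d,
          e ![0, jk.1, jk.2] * ((Nat.multinomial Finset.univ ![0, jk.1, jk.2] : ℝ)
            * (jk.1 * (u ^ (jk.1 - 1) * w ^ jk.2)))) • ℓ 1 +
        (∑ jk ∈ Finset.HasAntidiagonal.antidiagonal d,
          e ![0, jk.1, jk.2] * ((Nat.multinomial Finset.univ ![0, jk.1, jk.2] : ℝ)
            * (jk.2 * (u ^ jk.1 * w ^ (jk.2 - 1))))) • ℓ 2)) x := by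
  have h0 : γ x 0 = 0 := by rw [hval]; rfl
  have h1 : γ x 1 = u := by rw [hval]; rfl
  have h2 : γ x 2 = w := by rw [hval]; rfl
  have hval' : γ x = ![0, u, w] := hval
  -- step 1: each term has the derivative `Dterm e (γ x) ℓ t`
  have hterm : ∀ t ∈ Finset.Nat.antidiagonalTuple 3 d,
      HasFDerivAt (fun y => e t * ((Nat.multinomial Finset.univ t : ℝ) * ∏ i, γ y i ^ t i))
        (Dterm e (γ x) ℓ t) x := by
    intro t _
    have hf : ∀ i, HasFDerivAt (fun y => γ y i ^ t i)
        (((t i : ℝ) * γ x i ^ (t i - 1)) • ℓ i) x :=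
      fun i => (hasDerivAt_pow (t i) (γ x i)).comp_hasFDerivAt x (hderiv i)
    have h12 := (hf 1).mul (hf 2)
    have h012 := (hf 0).mul h12
    have hfin := h012.const_mul (e t * (Nat.multinomial Finset.univ t : ℝ))
    have hfun : (fun y => e t * ((Nat.multinomial Finset.univ t : ℝ) * ∏ i, γ y i ^ t i))
        = fun y => (e t * (Nat.multinomial Finset.univ t : ℝ)) *
            (γ y 0 ^ t 0 * (γ y 1 ^ t 1 * γ y 2 ^ t 2)) := by
      funext y
      rw [Fin.prod_univ_three]
      ring
    rw [hfun]
    exact hfin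
  have hsum : HasFDerivAt q (∑ t ∈ Finset.Nat.antidiagonalTuple 3 d, Dterm e (γ x) ℓ t) x := by
    rw [funext hq]
    exact HasFDerivAt.fun_sum hterm
  convert hsum using 1
  -- step 2: identify the sum of the `Dterm`s
  apply ContinuousLinearMap.ext
  intro y
  rw [ContinuousLinearMap.sum_apply]
  have hDval : ∀ t : Fin 3 → ℕ, Dterm e (γ x) ℓ t y =
      (e t * (Nat.multinomial Finset.univ t : ℝ)) *
        (γ x 0 ^ t 0 * (γ x 1 ^ t 1 * ((t 2 : ℝ) * γ x 2 ^ (t 2 - 1) * ℓ 2 y) +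
            γ x 2 ^ t 2 * ((t 1 : ℝ) * γ x 1 ^ (t 1 - 1) * ℓ 1 y)) +
          (γ x 1 ^ t 1 * γ x 2 ^ t 2) * ((t 0 : ℝ) * γ x 0 ^ (t 0 - 1) * ℓ 0 y)) := by
    intro t
    simp only [Dterm, ContinuousLinearMap.coe_smul', Pi.smul_apply,
      ContinuousLinearMap.add_apply, smul_eq_mul]
  rw [Finset.sum_congr rfl (fun t _ => hDval t)]
  obtain ⟨n, rfl⟩ : ∃ n, d = n + 1 := ⟨d - 1, by omega⟩
  rw [h0, h1, h2]
  rw [adT3_split n _ (by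
    intro a j k ha
    simp only [Matrix.cons_val_zero, Matrix.cons_val_one, Matrix.head_cons,
      Matrix.cons_val_two, Matrix.tail_cons]
    rw [zero_pow (by omega), zero_pow (by omega)]
    ring)]
  simp only [Matrix.cons_val_zero, Matrix.cons_val_one, Matrix.head_cons,
    Matrix.cons_val_two, Matrix.tail_cons, Nat.add_sub_cancel,
    ContinuousLinearMap.add_apply, ContinuousLinearMap.coe_smul', Pi.smul_apply, smul_eq_mul]
  congr 1
  · rw [Finset.sum_mul]
    apply Finset.sum_congr rfl
    intro jk _
    norm_num
    ring
  · rw [Finset.sum_mul, Finset.sum_mul, ← Finset.sum_add_distrib]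
    apply Finset.sum_congr rfl
    intro jk _
    norm_num
    ring

local notation "M" t => (Nat.multinomial Finset.univ t : ℝ)

lemma key1 (n : ℕ) (s : ℝ) (c c' : (Fin 3 → ℕ) → ℝ)
    (hC0 : ∀ j k : ℕ, j + k = n + 1 → c' ![0, j, k] = c ![0, k, j]) :
    ∑ jk ∈ Finset.HasAntidiagonal.antidiagonal (n + 1),
        c ![0, jk.1, jk.2] * ((M ![0, jk.1, jk.2]) * (jk.1 * ((1 - s) ^ (jk.1 - 1) * s ^ jk.2)))
      = ∑ jk ∈ Finset.HasAntidiagonal.antidiagonal (n + 1),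
        c' ![0, jk.1, jk.2] * ((M ![0, jk.1, jk.2]) * (jk.2 * (s ^ jk.1 * (1 - s) ^ (jk.2 - 1)))) := by
  rw [← Finset.Nat.sum_antidiagonal_swap (f := fun jk =>
    c ![0, jk.1, jk.2] * ((M ![0, jk.1, jk.2]) * (jk.1 * ((1 - s) ^ (jk.1 - 1) * s ^ jk.2))))]
  apply Finset.sum_congr rfl
  intro jk hjk
  rw [Finset.HasAntidiagonal.mem_antidiagonal] at hjk
  simp only [Prod.fst_swap, Prod.snd_swap]
  rw [hC0 jk.1 jk.2 hjk, m3_symm 0 jk.1 jk.2]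
  ring

lemma key2 (n : ℕ) (s : ℝ) (c c' : (Fin 3 → ℕ) → ℝ)
    (hC0 : ∀ j k : ℕ, j + k = n + 1 → c' ![0, j, k] = c ![0, k, j]) :
    ∑ jk ∈ Finset.HasAntidiagonal.antidiagonal (n + 1),
        c ![0, jk.1, jk.2] * ((M ![0, jk.1, jk.2]) * (jk.2 * ((1 - s) ^ jk.1 * s ^ (jk.2 - 1))))
      = ∑ jk ∈ Finset.HasAntidiagonal.antidiagonal (n + 1),
        c' ![0, jk.1, jk.2] * ((M ![0, jk.1, jk.2]) * (jk.1 * (s ^ (jk.1 - 1) * (1 - s) ^ jk.2))) := by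
  rw [← Finset.Nat.sum_antidiagonal_swap (f := fun jk =>
    c ![0, jk.1, jk.2] * ((M ![0, jk.1, jk.2]) * (jk.2 * ((1 - s) ^ jk.1 * s ^ (jk.2 - 1)))))]
  apply Finset.sum_congr rfl
  intro jk hjk
  rw [Finset.HasAntidiagonal.mem_antidiagonal] at hjk
  simp only [Prod.fst_swap, Prod.snd_swap]
  rw [hC0 jk.1 jk.2 hjk, m3_symm 0 jk.1 jk.2]
  ring

lemma key3 (n : ℕ) (s : ℝ) (c c' : (Fin 3 → ℕ) → ℝ) (b0 b1 b2 : ℝ) :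
    b0 * (∑ jk ∈ Finset.HasAntidiagonal.antidiagonal n,
        c ![1, jk.1, jk.2] * ((M ![1, jk.1, jk.2]) * ((1 - s) ^ jk.1 * s ^ jk.2)))
    + b1 * (∑ jk ∈ Finset.HasAntidiagonal.antidiagonal (n + 1),
        c ![0, jk.1, jk.2] * ((M ![0, jk.1, jk.2]) * (jk.1 * ((1 - s) ^ (jk.1 - 1) * s ^ jk.2))))
    + b2 * (∑ jk ∈ Finset.HasAntidiagonal.antidiagonal (n + 1),
        c ![0, jk.1, jk.2] * ((M ![0, jk.1, jk.2]) * (jk.2 * ((1 - s) ^ jk.1 * s ^ (jk.2 - 1)))))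
    - (∑ jk ∈ Finset.HasAntidiagonal.antidiagonal n,
        c' ![1, jk.1, jk.2] * ((M ![1, jk.1, jk.2]) * (s ^ jk.1 * (1 - s) ^ jk.2)))
    = ∑ jk ∈ Finset.HasAntidiagonal.antidiagonal n,
        ((M ![1, jk.1, jk.2]) * (b0 * c ![1, jk.1, jk.2] + b1 * c ![0, jk.1 + 1, jk.2]
          + b2 * c ![0, jk.1, jk.2 + 1] - c' ![1, jk.2, jk.1])) * ((1 - s) ^ jk.1 * s ^ jk.2) := by
  have h1 : b1 * (∑ jk ∈ Finset.HasAntidiagonal.antidiagonal (n + 1),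
        c ![0, jk.1, jk.2] * ((M ![0, jk.1, jk.2]) * (jk.1 * ((1 - s) ^ (jk.1 - 1) * s ^ jk.2))))
      = ∑ jk ∈ Finset.HasAntidiagonal.antidiagonal n,
        b1 * (c ![0, jk.1 + 1, jk.2] * ((M ![0, jk.1 + 1, jk.2]) * ((jk.1 + 1) * ((1 - s) ^ jk.1 * s ^ jk.2)))) := by
    rw [Finset.mul_sum, Finset.Nat.sum_antidiagonal_succ]
    simp only [Nat.cast_zero, zero_mul, mul_zero, zero_add, Nat.cast_ofNat, Nat.add_sub_cancel]
    apply Finset.sum_congr rfl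
    intro jk _
    push_cast
    ring
  have h2 : b2 * (∑ jk ∈ Finset.HasAntidiagonal.antidiagonal (n + 1),
        c ![0, jk.1, jk.2] * ((M ![0, jk.1, jk.2]) * (jk.2 * ((1 - s) ^ jk.1 * s ^ (jk.2 - 1)))))
      = ∑ jk ∈ Finset.HasAntidiagonal.antidiagonal n,
        b2 * (c ![0, jk.1, jk.2 + 1] * ((M ![0, jk.1, jk.2 + 1]) * ((jk.2 + 1) * ((1 - s) ^ jk.1 * s ^ jk.2)))) := by
    rw [Finset.mul_sum, Finset.Nat.sum_antidiagonal_succ']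
    simp only [Nat.cast_zero, zero_mul, mul_zero, zero_add, Nat.add_sub_cancel]
    apply Finset.sum_congr rfl
    intro jk _
    push_cast
    ring
  have h3 : (∑ jk ∈ Finset.HasAntidiagonal.antidiagonal n,
        c' ![1, jk.1, jk.2] * ((M ![1, jk.1, jk.2]) * (s ^ jk.1 * (1 - s) ^ jk.2)))
      = ∑ jk ∈ Finset.HasAntidiagonal.antidiagonal n,
        c' ![1, jk.2, jk.1] * ((M ![1, jk.1, jk.2]) * ((1 - s) ^ jk.1 * s ^ jk.2)) := by
    rw [← Finset.Nat.sum_antidiagonal_swap (f := fun jk =>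
      c' ![1, jk.1, jk.2] * ((M ![1, jk.1, jk.2]) * (s ^ jk.1 * (1 - s) ^ jk.2)))]
    apply Finset.sum_congr rfl
    intro jk hjk
    simp only [Prod.fst_swap, Prod.snd_swap]
    rw [m3_symm 1 jk.2 jk.1]
    ring
  rw [h1, h2, h3, Finset.mul_sum, ← Finset.sum_add_distrib, ← Finset.sum_add_distrib,
    ← Finset.sum_sub_distrib]
  apply Finset.sum_congr rfl
  intro jk _
  have hA1 : ((jk.1 + 1 : ℕ) : ℝ) * (M ![0, jk.1 + 1, jk.2]) = (M ![1, jk.1, jk.2]) := by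
    exact_mod_cast congrArg (Nat.cast : ℕ → ℝ) (m_id2 jk.1 jk.2)
  have hA2 : ((jk.2 + 1 : ℕ) : ℝ) * (M ![0, jk.1, jk.2 + 1]) = (M ![1, jk.1, jk.2]) := by
    exact_mod_cast congrArg (Nat.cast : ℕ → ℝ) (m_id1 jk.1 jk.2)
  push_cast at hA1 hA2 ⊢
  linear_combination (b1 * c ![0, jk.1 + 1, jk.2] * ((1 - s) ^ jk.1 * s ^ jk.2)) * hA1 +
    (b2 * c ![0, jk.1, jk.2 + 1] * ((1 - s) ^ jk.1 * s ^ jk.2)) * hA2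


set_option maxHeartbeats 2000000 in
/-- C¹ smoothness condition in Bernstein–Bézier form: given the C⁰ condition
`c̃_{0jk} = c_{0kj}` (`j+k=d`), the piecewise function equal to `p` on `T` and
`p̃` on `T̃` is C¹ across the common edge (the gradients of `p` and `p̃` agree
on the line through `v₂,v₃`) if and only if
`c̃_{1jk} = b₁ c_{1,k,j} + b₂ c_{0,k+1,j} + b₃ c_{0,k,j+1}` for all `j+k = d−1`,
where `(b₁,b₂,b₃)` are the barycentric coordinates of `v₄` relative to `T`. -/
theorem bb_c1_smoothness
    (d : ℕ) (hd : 1 ≤ d) (v₁ v₂ v₃ v₄ : Fin 2 → ℝ)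
    (hT : AffineIndependent ℝ ![v₁, v₂, v₃])
    (hT' : AffineIndependent ℝ ![v₄, v₃, v₂])
    (β β' : (Fin 2 → ℝ) → Fin 3 → ℝ)
    (hβ1 : ∀ x, ∑ i, β x i = 1)
    (hβ2 : ∀ x, ∑ i, β x i • ![v₁, v₂, v₃] i = x)
    (hβ'1 : ∀ x, ∑ i, β' x i = 1)
    (hβ'2 : ∀ x, ∑ i, β' x i • ![v₄, v₃, v₂] i = x)
    (b : Fin 3 → ℝ)
    (hb1 : ∑ i, b i = 1)
    (hb2 : ∑ i, b i • ![v₁, v₂, v₃] i = v₄)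
    (c c' : (Fin 3 → ℕ) → ℝ)
    (p p' : (Fin 2 → ℝ) → ℝ)
    (hp : ∀ x, p x = ∑ t ∈ Finset.Nat.antidiagonalTuple 3 d,
      c t * ((Nat.multinomial Finset.univ t : ℝ) * ∏ i, β x i ^ t i))
    (hp' : ∀ x, p' x = ∑ t ∈ Finset.Nat.antidiagonalTuple 3 d,
      c' t * ((Nat.multinomial Finset.univ t : ℝ) * ∏ i, β' x i ^ t i))
    (hC0 : ∀ j k : ℕ, j + k = d → c' ![0, j, k] = c ![0, k, j]) :
    (∀ s : ℝ, fderiv ℝ p ((1 - s) • v₂ + s • v₃) =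
        fderiv ℝ p' ((1 - s) • v₂ + s • v₃)) ↔
      (∀ j k : ℕ, j + k = d - 1 →
        c' ![1, j, k] =
          b 0 * c ![1, k, j] + b 1 * c ![0, k + 1, j] + b 2 * c ![0, k, j + 1]) := by
  obtain ⟨n, rfl⟩ : ∃ n, d = n + 1 := ⟨d - 1, by omega⟩
  -- uniqueness of barycentric coordinates
  have huniq : ∀ (vv : Fin 3 → Fin 2 → ℝ), AffineIndependent ℝ vv → ∀ w w' : Fin 3 → ℝ,
      ∑ i, w i = 1 → ∑ i, w' i = 1 → ∑ i, w i • vv i = ∑ i, w' i • vv i → w = w' := by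
    intro vv hvv w w' hw hw' hww
    funext i
    exact hvv.eq_of_sum_eq_sum (by rw [hw, hw']) hww i (Finset.mem_univ i)
  -- an affine basis from T
  have hcard : Fintype.card (Fin 3) = Module.finrank ℝ (Fin 2 → ℝ) + 1 := by
    simp [Module.finrank_fin_fun]
  let B : AffineBasis (Fin 3) ℝ (Fin 2 → ℝ) :=
    ⟨![v₁, v₂, v₃], hT, hT.affineSpan_eq_top_iff_card_eq_finrank_add_one.mpr hcard⟩
  have hβB : ∀ x, β x = fun i => B.coord i x := by
    intro x
    apply huniq _ hT _ _ (hβ1 x) (B.sum_coord_apply_eq_one x)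
    rw [hβ2 x]
    exact (B.linear_combination_coord_eq_self x).symm
  let L : Fin 3 → ((Fin 2 → ℝ) →L[ℝ] ℝ) := fun i =>
    LinearMap.toContinuousLinearMap (B.coord i).linear
  have hβd : ∀ (x : Fin 2 → ℝ) (i : Fin 3), HasFDerivAt (fun y => β y i) (L i) x := by
    intro x i
    have hfun : (fun y => β y i) = fun y => L i y + B.coord i 0 := by
      funext y
      rw [congrFun (hβB y) i]
      conv_lhs => rw [AffineMap.decomp (B.coord i)]
      simp [L, LinearMap.coe_toContinuousLinearMap']
    rw [hfun]
    exact (L i).hasFDerivAt.add_const _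
  have hedge : ∀ s : ℝ, β ((1 - s) • v₂ + s • v₃) = ![0, 1 - s, s] := by
    intro s
    apply huniq _ hT _ _ (hβ1 _) (by
      rw [Fin.sum_univ_three]
      simp only [Matrix.cons_val_zero, Matrix.cons_val_one, Matrix.head_cons,
        Matrix.cons_val_two, Matrix.tail_cons]
      ring)
    rw [hβ2]
    rw [Fin.sum_univ_three]
    simp only [Matrix.cons_val_zero, Matrix.cons_val_one, Matrix.head_cons,
      Matrix.cons_val_two, Matrix.tail_cons, zero_smul, zero_add]
  have hb2' : b 0 • v₁ + b 1 • v₂ + b 2 • v₃ = v₄ := by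
    have := hb2
    rwa [Fin.sum_univ_three] at this
  have hb1' : b 0 + b 1 + b 2 = 1 := by
    have := hb1
    rwa [Fin.sum_univ_three] at this
  have hb0 : b 0 ≠ 0 := by
    intro h0
    have h1 := hT'.eq_zero_of_sum_eq_zero (w := ![1, -(b 2), -(b 1)]) (s := Finset.univ)
      (by
        rw [Fin.sum_univ_three]
        simp only [Matrix.cons_val_zero, Matrix.cons_val_one, Matrix.head_cons,
          Matrix.cons_val_two, Matrix.tail_cons]
        linarith)
      (by
        rw [Fin.sum_univ_three]
        simp only [Matrix.cons_val_zero, Matrix.cons_val_one, Matrix.head_cons,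
          Matrix.cons_val_two, Matrix.tail_cons]
        funext m
        have h4 := congrFun hb2' m
        simp only [Pi.add_apply, Pi.smul_apply, Pi.zero_apply, Pi.neg_apply, smul_eq_mul,
          one_mul, neg_mul, h0, zero_mul] at h4 ⊢
        linarith)
      0 (Finset.mem_univ 0)
    simp at h1
  have hβ'B : ∀ x, β' x = ![(b 0)⁻¹ * β x 0, β x 2 - b 2 * ((b 0)⁻¹ * β x 0),
      β x 1 - b 1 * ((b 0)⁻¹ * β x 0)] := by
    intro x
    have hx1 : β x 0 + β x 1 + β x 2 = 1 := by
      have := hβ1 x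
      rwa [Fin.sum_univ_three] at this
    have hx2 : β x 0 • v₁ + β x 1 • v₂ + β x 2 • v₃ = x := by
      have := hβ2 x
      rwa [Fin.sum_univ_three] at this
    apply huniq _ hT' _ _ (hβ'1 x)
    · rw [Fin.sum_univ_three]
      simp only [Matrix.cons_val_zero, Matrix.cons_val_one, Matrix.head_cons,
        Matrix.cons_val_two, Matrix.tail_cons]
      field_simp
      linear_combination (b 0) * hx1 - (β x 0) * hb1'
    · rw [hβ'2 x, Fin.sum_univ_three]
      simp only [Matrix.cons_val_zero, Matrix.cons_val_one, Matrix.head_cons,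
        Matrix.cons_val_two, Matrix.tail_cons]
      funext m
      have h4 := congrFun hb2' m
      have h5 := congrFun hx2 m
      simp only [Pi.add_apply, Pi.smul_apply, smul_eq_mul] at h4 h5 ⊢
      field_simp
      linear_combination (β x 0) * h4 - (b 0) * h5
  have hedge' : ∀ s : ℝ, β' ((1 - s) • v₂ + s • v₃) = ![0, s, 1 - s] := by
    intro s
    rw [hβ'B, hedge s]
    funext i
    fin_cases i <;>
      simp only [Matrix.cons_val_zero, Matrix.cons_val_one, Matrix.head_cons,
        Matrix.cons_val_two, Matrix.tail_cons, mul_zero, sub_zero, Fin.isValue]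
  have hβ'd : ∀ (x : Fin 2 → ℝ) (i : Fin 3), HasFDerivAt (fun y => β' y i)
      (![(b 0)⁻¹ • L 0, L 2 - b 2 • ((b 0)⁻¹ • L 0), L 1 - b 1 • ((b 0)⁻¹ • L 0)] i) x := by
    intro x i
    have hD0 : HasFDerivAt (fun y => β' y 0) ((b 0)⁻¹ • L 0) x := by
      have hfun : (fun y => β' y 0) = fun y => (b 0)⁻¹ * β y 0 := by
        funext y
        rw [congrFun (hβ'B y) 0]
        simp only [Matrix.cons_val_zero]
      rw [hfun]
      exact (hβd x 0).const_mul _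
    have hD1 : HasFDerivAt (fun y => β' y 1) (L 2 - b 2 • ((b 0)⁻¹ • L 0)) x := by
      have hfun : (fun y => β' y 1) = fun y => β y 2 - b 2 * ((b 0)⁻¹ * β y 0) := by
        funext y
        rw [congrFun (hβ'B y) 1]
        simp only [Matrix.cons_val_one, Matrix.head_cons, Matrix.cons_val_zero]
      rw [hfun]
      exact (hβd x 2).sub (((hβd x 0).const_mul (b 0)⁻¹).const_mul (b 2))
    have hD2 : HasFDerivAt (fun y => β' y 2) (L 1 - b 1 • ((b 0)⁻¹ • L 0)) x := by
      have hfun : (fun y => β' y 2) = fun y => β y 1 - b 1 * ((b 0)⁻¹ * β y 0) := by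
        funext y
        rw [congrFun (hβ'B y) 2]
        simp only [Matrix.cons_val_two, Matrix.tail_cons, Matrix.head_cons]
      rw [hfun]
      exact (hβd x 1).sub (((hβd x 0).const_mul (b 0)⁻¹).const_mul (b 1))
    fin_cases i
    · exact hD0
    · exact hD1
    · exact hD2
  -- the derivative of p and p' at points of the edge
  have hDp : ∀ s : ℝ, HasFDerivAt p
      ((∑ jk ∈ Finset.HasAntidiagonal.antidiagonal (n + 1 - 1),
          c ![1, jk.1, jk.2] * ((Nat.multinomial Finset.univ ![1, jk.1, jk.2] : ℝ)
            * ((1 - s) ^ jk.1 * s ^ jk.2))) • L 0 +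
       ((∑ jk ∈ Finset.HasAntidiagonal.antidiagonal (n + 1),
          c ![0, jk.1, jk.2] * ((Nat.multinomial Finset.univ ![0, jk.1, jk.2] : ℝ)
            * (jk.1 * ((1 - s) ^ (jk.1 - 1) * s ^ jk.2)))) • L 1 +
        (∑ jk ∈ Finset.HasAntidiagonal.antidiagonal (n + 1),
          c ![0, jk.1, jk.2] * ((Nat.multinomial Finset.univ ![0, jk.1, jk.2] : ℝ)
            * (jk.2 * ((1 - s) ^ jk.1 * s ^ (jk.2 - 1))))) • L 2)) ((1 - s) • v₂ + s • v₃) :=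
    fun s => deriv_formula (n + 1) (by omega) β L _ (1 - s) s (hedge s)
      (fun i => hβd _ i) c p hp
  have hDp' : ∀ s : ℝ, HasFDerivAt p'
      ((∑ jk ∈ Finset.HasAntidiagonal.antidiagonal (n + 1 - 1),
          c' ![1, jk.1, jk.2] * ((Nat.multinomial Finset.univ ![1, jk.1, jk.2] : ℝ)
            * (s ^ jk.1 * (1 - s) ^ jk.2))) •
            (![(b 0)⁻¹ • L 0, L 2 - b 2 • ((b 0)⁻¹ • L 0), L 1 - b 1 • ((b 0)⁻¹ • L 0)] 0) +
       ((∑ jk ∈ Finset.HasAntidiagonal.antidiagonal (n + 1),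
          c' ![0, jk.1, jk.2] * ((Nat.multinomial Finset.univ ![0, jk.1, jk.2] : ℝ)
            * (jk.1 * (s ^ (jk.1 - 1) * (1 - s) ^ jk.2)))) •
            (![(b 0)⁻¹ • L 0, L 2 - b 2 • ((b 0)⁻¹ • L 0), L 1 - b 1 • ((b 0)⁻¹ • L 0)] 1) +
        (∑ jk ∈ Finset.HasAntidiagonal.antidiagonal (n + 1),
          c' ![0, jk.1, jk.2] * ((Nat.multinomial Finset.univ ![0, jk.1, jk.2] : ℝ)
            * (jk.2 * (s ^ jk.1 * (1 - s) ^ (jk.2 - 1))))) •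
            (![(b 0)⁻¹ • L 0, L 2 - b 2 • ((b 0)⁻¹ • L 0), L 1 - b 1 • ((b 0)⁻¹ • L 0)] 2)))
      ((1 - s) • v₂ + s • v₃) :=
    fun s => deriv_formula (n + 1) (by omega) β'
      ![(b 0)⁻¹ • L 0, L 2 - b 2 • ((b 0)⁻¹ • L 0), L 1 - b 1 • ((b 0)⁻¹ • L 0)]
      _ s (1 - s) (hedge' s) (fun i => hβ'd _ i) c' p' hp'
  -- value of L 0 on a transversal vector
  have hl0 : L 0 (v₁ - v₂) = 1 := by
    have h1 : L 0 (v₁ - v₂) = (B.coord 0).linear (v₁ - v₂) := rfl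
    rw [h1, show v₁ - v₂ = v₁ -ᵥ v₂ from rfl, AffineMap.linearMap_vsub]
    have e1 : B.coord 0 v₁ = 1 := by
      have h := AffineBasis.coord_apply (b := B) 0 0
      rw [if_pos rfl] at h
      exact h
    have e2 : B.coord 0 v₂ = 0 := by
      have h := AffineBasis.coord_apply (b := B) 0 1
      rw [if_neg (by decide)] at h
      exact h
    rw [vsub_eq_sub, e1, e2]
    norm_num
  -- the central equivalence, for each point of the edge
  have hiff : ∀ s : ℝ,
      (fderiv ℝ p ((1 - s) • v₂ + s • v₃) = fderiv ℝ p' ((1 - s) • v₂ + s • v₃)) ↔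
      (∑ jk ∈ Finset.HasAntidiagonal.antidiagonal n,
        ((Nat.multinomial Finset.univ ![1, jk.1, jk.2] : ℝ) * (b 0 * c ![1, jk.1, jk.2]
          + b 1 * c ![0, jk.1 + 1, jk.2] + b 2 * c ![0, jk.1, jk.2 + 1]
          - c' ![1, jk.2, jk.1])) * ((1 - s) ^ jk.1 * s ^ jk.2)) = 0 := by
    intro s
    rw [(hDp s).fderiv, (hDp' s).fderiv]
    simp only [Nat.add_sub_cancel, Matrix.cons_val_zero, Matrix.cons_val_one, Matrix.head_cons,
      Matrix.cons_val_two, Matrix.tail_cons]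
    have hk1 := key1 n s c c' (fun j k h => hC0 j k h)
    have hk2 := key2 n s c c' (fun j k h => hC0 j k h)
    have hk3 := key3 n s c c' (b 0) (b 1) (b 2)
    rw [hk1, hk2] at hk3
    constructor
    · intro heq
      have happ := congrArg (fun (f : (Fin 2 → ℝ) →L[ℝ] ℝ) => f (v₁ - v₂)) heq
      simp only [ContinuousLinearMap.add_apply, ContinuousLinearMap.coe_smul', Pi.smul_apply,
        ContinuousLinearMap.coe_sub', Pi.sub_apply, smul_eq_mul, hl0, mul_one] at happ
      rw [← hk3]
      rw [hk1, hk2] at happ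
      field_simp at happ ⊢
      linear_combination happ
    · intro hE0
      rw [hk1, hk2]
      apply ContinuousLinearMap.ext
      intro y
      rw [← hk3] at hE0
      simp only [ContinuousLinearMap.add_apply, ContinuousLinearMap.coe_smul', Pi.smul_apply,
        ContinuousLinearMap.coe_sub', Pi.sub_apply, smul_eq_mul]
      field_simp at hE0 ⊢
      linear_combination (L 0 y) * hE0
  constructor
  · intro h j k hjk
    have hall : ∀ s : ℝ, ∑ i ∈ Finset.range (n + 1),
        (fun i => ((Nat.multinomial Finset.univ ![1, i, n - i] : ℝ) * (b 0 * c ![1, i, n - i]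
          + b 1 * c ![0, i + 1, n - i] + b 2 * c ![0, i, n - i + 1]
          - c' ![1, n - i, i])) ) i * ((1 - s) ^ i * s ^ (n - i)) = 0 := by
      intro s
      have h2 := (hiff s).mp (h s)
      rwa [Finset.Nat.sum_antidiagonal_eq_sum_range_succ_mk] at h2
    have hcoef := bern_indep n _ hall k (by omega)
    have hj : n - k = j := by omega
    rw [hj] at hcoef
    have hMpos : (0 : ℝ) < (Nat.multinomial Finset.univ ![1, k, j] : ℝ) := by
      exact_mod_cast Nat.multinomial_pos _ _
    have hbr : b 0 * c ![1, k, j] + b 1 * c ![0, k + 1, j] + b 2 * c ![0, k, j + 1]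
        - c' ![1, j, k] = 0 := by
      rcases mul_eq_zero.mp hcoef with h' | h'
      · exact absurd h' hMpos.ne'
      · exact h'
    linarith
  · intro h s
    rw [hiff s]
    apply Finset.sum_eq_zero
    intro jk hjk
    rw [Finset.HasAntidiagonal.mem_antidiagonal] at hjk
    have h2 := h jk.2 jk.1 (by omega)
    rw [h2]
    ring
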